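/- arXiv:2603.14708 — 3 statements merged into one kernel-verified Lean document; each statement's English description precedes it below -/
import Mathlib

section
/- Let z ∈ ℂ with z ≠ 0. Then there exists N₀ ∈ ℕ such that for all integers n ≥ N₀ one has h_n^{(1)}(z) ≠ 0 and z_n^{(1)}(z) ≠ 0; moreover, the sequence z_n^{(1)}(z)/(n·h_n^{(1)}(z)) converges to −1 as n → ∞. -/
open Complex Filter Finset

/-- Spherical Hankel function of the first kind (Rayleigh closed form). -/
noncomputable def sphHankel (n : ℕ) (z : ℂ) : ℂ :=
  (-Complex.I) ^ (n + 1) * (Complex.exp (Complex.I * z) / z) *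
    ∑ k ∈ Finset.range (n + 1),
      (Complex.I ^ k / ((Nat.factorial k : ℂ) * (2 * z) ^ k)) *
        ((Nat.factorial (n + k) : ℂ) / (Nat.factorial (n - k) : ℂ))

/-- `z_n^{(1)}(z) = h_n^{(1)}(z) + z * h_n^{(1)'}(z)`. -/
noncomputable def zfun (n : ℕ) (z : ℂ) : ℂ :=
  sphHankel n z + z * deriv (sphHankel n) z

noncomputable def dcoef (n k : ℕ) : ℂ :=
  Complex.I ^ k / ((Nat.factorial k : ℂ) * 2 ^ k) *
    ((Nat.factorial (n + k) : ℂ) / (Nat.factorial (n - k) : ℂ))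

noncomputable def phiC (z : ℂ) (n j : ℕ) : ℂ :=
  (-2 * Complex.I * z) ^ j / (Nat.factorial j : ℂ) *
    (((Nat.factorial n : ℂ) / (Nat.factorial (n - j) : ℂ)) *
      ((Nat.factorial (2 * n - j) : ℂ) / (Nat.factorial (2 * n) : ℂ)))

lemma fact_ne (m : ℕ) : ((Nat.factorial m : ℂ)) ≠ 0 :=
  Nat.cast_ne_zero.mpr (Nat.factorial_ne_zero m)

lemma dcoef_ne (n k : ℕ) : dcoef n k ≠ 0 := by
  unfold dcoef
  apply mul_ne_zero
  · exact div_ne_zero (pow_ne_zero _ Complex.I_ne_zero)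
      (mul_ne_zero (fact_ne _) (pow_ne_zero _ two_ne_zero))
  · exact div_ne_zero (fact_ne _) (fact_ne _)

lemma sphHankel_eq (n : ℕ) (z : ℂ) (hz : z ≠ 0) :
    sphHankel n z = ∑ k ∈ Finset.range (n + 1),
      (-Complex.I) ^ (n + 1) * dcoef n k * (Complex.exp (Complex.I * z) / z ^ (k + 1)) := by
  unfold sphHankel
  rw [mul_sum]
  refine Finset.sum_congr rfl fun k _ => ?_
  unfold dcoef
  simp only [div_eq_mul_inv, mul_inv, ← inv_pow]
  ring

lemma hasDerivAt_sphHankel (n : ℕ) (z : ℂ) (hz : z ≠ 0) :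
    HasDerivAt (sphHankel n)
      (∑ k ∈ Finset.range (n + 1),
        (-Complex.I) ^ (n + 1) * dcoef n k *
          (Complex.exp (Complex.I * z) * (Complex.I * z - (k + 1)) / z ^ (k + 2))) z := by
  have key : ∀ k : ℕ, HasDerivAt (fun w : ℂ => Complex.exp (Complex.I * w) / w ^ (k + 1))
      (Complex.exp (Complex.I * z) * (Complex.I * z - (k + 1)) / z ^ (k + 2)) z := by
    intro k
    have h1 : HasDerivAt (fun w : ℂ => Complex.exp (Complex.I * w))
        (Complex.exp (Complex.I * z) * Complex.I) z := by
      have := (Complex.hasDerivAt_exp (Complex.I * z)).comp z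
        ((hasDerivAt_id z).const_mul Complex.I)
      simpa [Function.comp_def] using this
    have h2 : HasDerivAt (fun w : ℂ => w ^ (k + 1)) ((k + 1 : ℂ) * z ^ k) z := by
      simpa using hasDerivAt_pow (k + 1) z
    have := h1.fun_div h2 (pow_ne_zero _ hz)
    refine this.congr_deriv ?_
    have hzk : (z : ℂ) ^ k ≠ 0 := pow_ne_zero _ hz
    field_simp
    ring
  have hsum : HasDerivAt (fun w : ℂ => ∑ k ∈ Finset.range (n + 1),
      (-Complex.I) ^ (n + 1) * dcoef n k * (Complex.exp (Complex.I * w) / w ^ (k + 1)))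
      (∑ k ∈ Finset.range (n + 1),
        (-Complex.I) ^ (n + 1) * dcoef n k *
          (Complex.exp (Complex.I * z) * (Complex.I * z - (k + 1)) / z ^ (k + 2))) z :=
    HasDerivAt.fun_sum fun k _ => ((key k).const_mul _)
  apply hsum.congr_of_eventuallyEq
  filter_upwards [isOpen_compl_singleton.mem_nhds (by simpa using hz : z ∈ ({0}ᶜ : Set ℂ))]
    with w hw
  exact sphHankel_eq n w hw

lemma zfun_eq (n : ℕ) (z : ℂ) (hz : z ≠ 0) :
    zfun n z = ∑ k ∈ Finset.range (n + 1),
      (-Complex.I) ^ (n + 1) * dcoef n k *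
        (Complex.exp (Complex.I * z) * (Complex.I * z - k) / z ^ (k + 1)) := by
  unfold zfun
  rw [(hasDerivAt_sphHankel n z hz).deriv, sphHankel_eq n z hz, Finset.mul_sum,
    ← Finset.sum_add_distrib]
  refine Finset.sum_congr rfl fun k _ => ?_
  have hzk : (z : ℂ) ^ k ≠ 0 := pow_ne_zero _ hz
  field_simp
  ring

lemma dcoef_key (z : ℂ) {n j : ℕ} (hj : j ≤ n) :
    dcoef n (n - j) * z ^ j = dcoef n n * phiC z n j := by
  obtain ⟨m, rfl⟩ := Nat.exists_eq_add_of_le hj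
  unfold dcoef phiC
  have e1 : j + m - j = m := by omega
  have e2 : j + m - m = j := by omega
  have e3 : j + m + m = j + 2 * m := by omega
  have e4 : j + m - (j + m) = 0 := by omega
  have e5 : j + m + (j + m) = 2 * (j + m) := by omega
  have e6 : 2 * (j + m) - j = j + 2 * m := by omega
  rw [e1, e2, e3, e4, e5, e6]
  have hL : Complex.I ^ (j * 2) * (-2 : ℂ) ^ j = 2 ^ j := by
    rw [mul_comm j 2, pow_mul, Complex.I_sq, ← mul_pow]; norm_num
  have f1 := fact_ne j
  have f2 := fact_ne m
  have f3 := fact_ne (j + m)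
  have f4 := fact_ne (j + 2 * m)
  have f5 := fact_ne (2 * (j + m))
  field_simp
  simp only [Nat.factorial_zero, Nat.cast_one, mul_one]
  linear_combination (-(Complex.I ^ m * z ^ j * 2 ^ m)) * hL

lemma sum_reindex (z : ℂ) (hz : z ≠ 0) (n : ℕ) (w : ℕ → ℂ) :
    ∑ k ∈ Finset.range (n + 1), dcoef n k * w k / z ^ (k + 1) =
      (dcoef n n / z ^ (n + 1)) * ∑ j ∈ Finset.range (n + 1), w (n - j) * phiC z n j := by
  rw [Finset.mul_sum, ← Finset.sum_range_reflect]
  refine Finset.sum_congr rfl fun j hj => ?_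
  have hjn : j ≤ n := by simpa [Nat.lt_succ_iff] using Finset.mem_range.mp hj
  have e0 : n + 1 - 1 - j = n - j := by omega
  rw [e0]
  have hkey := dcoef_key z hjn
  have hz1 : z ^ (n - j + 1) ≠ 0 := pow_ne_zero _ hz
  have hz2 : z ^ (n + 1) ≠ 0 := pow_ne_zero _ hz
  have hpow : z ^ (n + 1) = z ^ (n - j + 1) * z ^ j := by rw [← pow_add]; congr 1; omega
  field_simp
  rw [hpow]
  linear_combination (w (n - j) * z ^ (n - j + 1)) * hkey

lemma tendsto_inv_nat_complex :
    Tendsto (fun n : ℕ => ((n : ℂ))⁻¹) atTop (nhds 0) := by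
  have h : Tendsto (fun n : ℕ => ((((n:ℝ))⁻¹ : ℝ) : ℂ)) atTop (nhds ((0:ℝ) : ℂ)) :=
    (Complex.continuous_ofReal.tendsto (0:ℝ)).comp tendsto_inv_atTop_nhds_zero_nat
  simpa using h

lemma tendsto_factor_half (m : ℕ) :
    Tendsto (fun n : ℕ => ((n - m : ℕ) : ℂ) / ((2 * n - m : ℕ) : ℂ)) atTop (nhds (1 / 2)) := by
  have hreal : Tendsto (fun n : ℕ => ((n - m : ℕ) : ℝ) / ((2 * n - m : ℕ) : ℝ)) atTop
      (nhds (1 / 2)) := by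
    have hlim : Tendsto (fun n : ℕ => (1 - m * ((n : ℝ))⁻¹) / (2 - m * ((n : ℝ))⁻¹)) atTop
        (nhds (1 / 2)) := by
      have h0 : Tendsto (fun n : ℕ => (m : ℝ) * ((n : ℝ))⁻¹) atTop (nhds 0) := by
        simpa using (tendsto_inv_atTop_nhds_zero_nat.const_mul (m : ℝ))
      have hnum : Tendsto (fun n : ℕ => 1 - (m : ℝ) * ((n : ℝ))⁻¹) atTop (nhds 1) := by
        simpa using (tendsto_const_nhds.sub h0)
      have hden : Tendsto (fun n : ℕ => 2 - (m : ℝ) * ((n : ℝ))⁻¹) atTop (nhds 2) := by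
        simpa using (tendsto_const_nhds.sub h0)
      simpa [Pi.div_def] using hnum.div hden (by norm_num)
    apply hlim.congr'
    filter_upwards [eventually_ge_atTop (m + 1)] with n hn
    have hm : m ≤ n := by omega
    have hn1 : (1:ℝ) ≤ (n:ℝ) := by exact_mod_cast (by omega : 1 ≤ n)
    have hn0 : (n : ℝ) ≠ 0 := by linarith
    have hmn : (m : ℝ) ≤ (n : ℝ) := by exact_mod_cast hm
    have hd : (2 * (n : ℝ) - m) ≠ 0 := by nlinarith
    rw [Nat.cast_sub hm, Nat.cast_sub (by omega : m ≤ 2 * n)]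
    push_cast
    field_simp
  have h : Tendsto (fun n : ℕ => ((((n - m : ℕ) : ℝ) / ((2 * n - m : ℕ) : ℝ) : ℝ) : ℂ)) atTop
      (nhds ((1/2 : ℝ) : ℂ)) := (Complex.continuous_ofReal.tendsto _).comp hreal
  simpa using h

lemma tendsto_factor_one (m : ℕ) :
    Tendsto (fun n : ℕ => ((n - m : ℕ) : ℂ) / ((n : ℕ) : ℂ)) atTop (nhds 1) := by
  have hreal : Tendsto (fun n : ℕ => ((n - m : ℕ) : ℝ) / ((n : ℕ) : ℝ)) atTop (nhds 1) := by
    have h0 : Tendsto (fun n : ℕ => (m : ℝ) * ((n : ℝ))⁻¹) atTop (nhds 0) := by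
      simpa using (tendsto_inv_atTop_nhds_zero_nat.const_mul (m : ℝ))
    have hnum : Tendsto (fun n : ℕ => 1 - (m : ℝ) * ((n : ℝ))⁻¹) atTop (nhds 1) := by
      simpa using (tendsto_const_nhds.sub h0)
    apply hnum.congr'
    filter_upwards [eventually_ge_atTop (m + 1)] with n hn
    have hm : m ≤ n := by omega
    have hn1 : (1:ℝ) ≤ (n:ℝ) := by exact_mod_cast (by omega : 1 ≤ n)
    have hn0 : (n : ℝ) ≠ 0 := by linarith
    rw [Nat.cast_sub hm]
    field_simp
  have h : Tendsto (fun n : ℕ => ((((n - m : ℕ) : ℝ) / ((n : ℕ) : ℝ) : ℝ) : ℂ)) atTop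
      (nhds ((1 : ℝ) : ℂ)) := (Complex.continuous_ofReal.tendsto _).comp hreal
  simpa using h

lemma ratio_prod {n j : ℕ} (hj : j ≤ n) :
    ((Nat.factorial n : ℂ) / (Nat.factorial (n - j) : ℂ)) *
      ((Nat.factorial (2 * n - j) : ℂ) / (Nat.factorial (2 * n) : ℂ)) =
    ∏ m ∈ Finset.range j, (((n - m : ℕ) : ℂ) / ((2 * n - m : ℕ) : ℂ)) := by
  have hj2 : j ≤ 2 * n := by omega
  have e1 : ((Nat.factorial n : ℂ)) / (Nat.factorial (n - j)) = (Nat.descFactorial n j : ℂ) := by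
    rw [div_eq_iff (fact_ne _)]
    exact_mod_cast ((mul_comm _ _).trans (Nat.factorial_mul_descFactorial hj)).symm
  have hdne : ((Nat.descFactorial (2 * n) j : ℂ)) ≠ 0 := by
    have h := Nat.factorial_mul_descFactorial hj2
    intro h0
    have h1 : (Nat.descFactorial (2 * n) j) = 0 := by exact_mod_cast h0
    rw [h1, mul_zero] at h
    exact Nat.factorial_ne_zero _ h.symm
  have e2 : ((Nat.factorial (2 * n - j) : ℂ)) / (Nat.factorial (2 * n)) =
      ((Nat.descFactorial (2 * n) j : ℂ))⁻¹ := by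
    have h2 : ((Nat.factorial (2 * n) : ℂ)) =
        (Nat.factorial (2 * n - j) : ℂ) * (Nat.descFactorial (2 * n) j : ℂ) := by
      exact_mod_cast (Nat.factorial_mul_descFactorial hj2).symm
    rw [h2]
    have := fact_ne (2 * n - j)
    field_simp
  rw [e1, e2]
  have p1 : (Nat.descFactorial n j : ℂ) = ∏ m ∈ Finset.range j, ((n - m : ℕ) : ℂ) := by
    rw [Nat.descFactorial_eq_prod_range]; push_cast [Nat.cast_prod]; rfl
  have p2 : (Nat.descFactorial (2 * n) j : ℂ) = ∏ m ∈ Finset.range j, ((2 * n - m : ℕ) : ℂ) := by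
    rw [Nat.descFactorial_eq_prod_range]; push_cast [Nat.cast_prod]; rfl
  rw [p1, p2, Finset.prod_div_distrib, div_eq_mul_inv]

lemma phiC_norm_le (z : ℂ) {n j : ℕ} (hj : j ≤ n) :
    ‖phiC z n j‖ ≤ (2 * ‖z‖) ^ j / (Nat.factorial j : ℝ) := by
  unfold phiC
  rw [ratio_prod hj]
  rw [norm_mul, norm_div, norm_pow]
  have h1 : ‖(-2 * Complex.I * z : ℂ)‖ = 2 * ‖z‖ := by
    simp [norm_mul]
  have h2 : ‖((Nat.factorial j : ℂ))‖ = (Nat.factorial j : ℝ) := by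
    simp
  rw [h1, h2]
  have h3 : ‖∏ m ∈ Finset.range j, (((n - m : ℕ) : ℂ) / ((2 * n - m : ℕ) : ℂ))‖ ≤ 1 := by
    rw [norm_prod]
    apply Finset.prod_le_one
    · intro m _; positivity
    · intro m hm
      rw [norm_div]
      simp only [Complex.norm_natCast]
      have hmj : m < j := Finset.mem_range.mp hm
      rcases Nat.eq_zero_or_pos (2 * n - m) with h | h
      · simp [h]
      · rw [div_le_one (by exact_mod_cast h)]
        exact_mod_cast Nat.sub_le_sub_right (by omega : n ≤ 2 * n) m
  calc (2 * ‖z‖) ^ j / (Nat.factorial j : ℝ) * ‖∏ m ∈ Finset.range j, (((n - m : ℕ) : ℂ) / ((2 * n - m : ℕ) : ℂ))‖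
      ≤ (2 * ‖z‖) ^ j / (Nat.factorial j : ℝ) * 1 := by
        apply mul_le_mul_of_nonneg_left h3 (by positivity)
    _ = (2 * ‖z‖) ^ j / (Nat.factorial j : ℝ) := mul_one _

lemma phiC_tendsto (z : ℂ) (j : ℕ) :
    Tendsto (fun n : ℕ => phiC z n j) atTop
      (nhds ((-(Complex.I * z)) ^ j / (Nat.factorial j : ℂ))) := by
  have hprod : Tendsto (fun n : ℕ =>
      ∏ m ∈ Finset.range j, (((n - m : ℕ) : ℂ) / ((2 * n - m : ℕ) : ℂ))) atTop
      (nhds ((1 / 2 : ℂ) ^ j)) := by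
    have := tendsto_finset_prod (f := fun m (n : ℕ) => ((n - m : ℕ) : ℂ) / ((2 * n - m : ℕ) : ℂ))
      (a := fun _ => (1 / 2 : ℂ)) (Finset.range j) (fun m _ => tendsto_factor_half m)
    simpa using this
  have hmain := hprod.const_mul ((-2 * Complex.I * z) ^ j / (Nat.factorial j : ℂ))
  have heq : ((-2 * Complex.I * z) ^ j / (Nat.factorial j : ℂ)) * (1 / 2 : ℂ) ^ j =
      (-(Complex.I * z)) ^ j / (Nat.factorial j : ℂ) := by
    rw [div_mul_eq_mul_div, ← mul_pow]
    congr 2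
    ring
  rw [heq] at hmain
  apply hmain.congr'
  filter_upwards [eventually_ge_atTop j] with n hn
  unfold phiC
  rw [ratio_prod hn]

lemma tendsto_F (z : ℂ) :
    Tendsto (fun n : ℕ => ∑ j ∈ Finset.range (n + 1), phiC z n j) atTop
      (nhds (Complex.exp (-(Complex.I * z)))) := by
  set Φ : ℕ → ℕ → ℂ := fun n j => if j ≤ n then phiC z n j else 0 with hΦ
  have hsum_eq : ∀ n, ∑' j, Φ n j = ∑ j ∈ Finset.range (n + 1), phiC z n j := by
    intro n
    rw [tsum_eq_sum (s := Finset.range (n + 1))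
      (fun b hb => by
        simp only [Finset.mem_range, Nat.lt_succ_iff, not_le] at hb
        simp [hΦ, Nat.not_le.mpr hb])]
    exact Finset.sum_congr rfl fun j hj => by
      simp only [Finset.mem_range, Nat.lt_succ_iff] at hj
      simp [hΦ, hj]
  have hbound : Summable (fun j : ℕ => (2 * ‖z‖) ^ j / (Nat.factorial j : ℝ)) :=
    Real.summable_pow_div_factorial _
  have hpt : ∀ j, Tendsto (fun n => Φ n j) atTop
      (nhds ((-(Complex.I * z)) ^ j / (Nat.factorial j : ℂ))) := by
    intro j
    apply (phiC_tendsto z j).congr'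
    filter_upwards [eventually_ge_atTop j] with n hn
    simp [hΦ, hn]
  have hb : ∀ᶠ (n : ℕ) in atTop, ∀ j, ‖Φ n j‖ ≤ (2 * ‖z‖) ^ j / (Nat.factorial j : ℝ) := by
    apply Eventually.of_forall
    intro n j
    by_cases hjn : j ≤ n
    · simp only [hΦ, if_pos hjn]
      exact phiC_norm_le z hjn
    · simp only [hΦ, if_neg hjn, norm_zero]
      positivity
  have h := tendsto_tsum_of_dominated_convergence hbound hpt hb
  have hexp : ∑' j : ℕ, (-(Complex.I * z)) ^ j / (Nat.factorial j : ℂ) =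
      Complex.exp (-(Complex.I * z)) := by
    rw [Complex.exp_eq_exp_ℂ, NormedSpace.exp_eq_tsum_div]
  rw [hexp] at h
  exact h.congr (fun n => hsum_eq n)

lemma tendsto_K (z : ℂ) :
    Tendsto (fun n : ℕ => ∑ j ∈ Finset.range (n + 1),
        (((n - j : ℕ) : ℂ) / (n : ℂ)) * phiC z n j) atTop
      (nhds (Complex.exp (-(Complex.I * z)))) := by
  set Ψ : ℕ → ℕ → ℂ := fun n j => if j ≤ n then (((n - j : ℕ) : ℂ) / (n : ℂ)) * phiC z n j else 0
    with hΨ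
  have hsum_eq : ∀ n, ∑' j, Ψ n j =
      ∑ j ∈ Finset.range (n + 1), (((n - j : ℕ) : ℂ) / (n : ℂ)) * phiC z n j := by
    intro n
    rw [tsum_eq_sum (s := Finset.range (n + 1))
      (fun b hb => by
        simp only [Finset.mem_range, Nat.lt_succ_iff, not_le] at hb
        simp [hΨ, Nat.not_le.mpr hb])]
    exact Finset.sum_congr rfl fun j hj => by
      simp only [Finset.mem_range, Nat.lt_succ_iff] at hj
      simp [hΨ, hj]
  have hbound : Summable (fun j : ℕ => (2 * ‖z‖) ^ j / (Nat.factorial j : ℝ)) :=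
    Real.summable_pow_div_factorial _
  have hpt : ∀ j, Tendsto (fun n => Ψ n j) atTop
      (nhds ((-(Complex.I * z)) ^ j / (Nat.factorial j : ℂ))) := by
    intro j
    have h1 := (tendsto_factor_one j).mul (phiC_tendsto z j)
    rw [one_mul] at h1
    apply h1.congr'
    filter_upwards [eventually_ge_atTop j] with n hn
    simp [hΨ, hn]
  have hb : ∀ᶠ (n : ℕ) in atTop, ∀ j, ‖Ψ n j‖ ≤ (2 * ‖z‖) ^ j / (Nat.factorial j : ℝ) := by
    apply Eventually.of_forall
    intro n j
    by_cases hjn : j ≤ n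
    · simp only [hΨ, if_pos hjn, norm_mul]
      have h1 : ‖(((n - j : ℕ) : ℂ) / (n : ℂ))‖ ≤ 1 := by
        rw [norm_div]
        simp only [Complex.norm_natCast]
        rcases Nat.eq_zero_or_pos n with h | h
        · subst h; simp
        · rw [div_le_one (by exact_mod_cast h)]
          exact_mod_cast Nat.sub_le n j
      calc ‖(((n - j : ℕ) : ℂ) / (n : ℂ))‖ * ‖phiC z n j‖
          ≤ 1 * ((2 * ‖z‖) ^ j / (Nat.factorial j : ℝ)) :=
            mul_le_mul h1 (phiC_norm_le z hjn) (norm_nonneg _) zero_le_one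
        _ = (2 * ‖z‖) ^ j / (Nat.factorial j : ℝ) := one_mul _
    · simp only [hΨ, if_neg hjn, norm_zero]
      positivity
  have h := tendsto_tsum_of_dominated_convergence hbound hpt hb
  have hexp : ∑' j : ℕ, (-(Complex.I * z)) ^ j / (Nat.factorial j : ℂ) =
      Complex.exp (-(Complex.I * z)) := by
    rw [Complex.exp_eq_exp_ℂ, NormedSpace.exp_eq_tsum_div]
  rw [hexp] at h
  exact h.congr (fun n => hsum_eq n)

lemma ratio_algebra (e f k c nc : ℂ) (he : e ≠ 0) (hf : f ≠ 0) (hn : nc ≠ 0) :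
    (e * (c * f - k)) / (nc * (e * f)) = c * nc⁻¹ - (k / nc) / f := by
  field_simp

theorem delta_div_n_tendsto_neg_one (z : ℂ) (hz : z ≠ 0) :
    ∃ N₀ : ℕ, (∀ n : ℕ, N₀ ≤ n → sphHankel n z ≠ 0 ∧ zfun n z ≠ 0) ∧
      Filter.Tendsto (fun n : ℕ => zfun n z / ((n : ℂ) * sphHankel n z))
        Filter.atTop (nhds (-1)) := by
  set F : ℕ → ℂ := fun n => ∑ j ∈ Finset.range (n + 1), phiC z n j with hF
  set K : ℕ → ℂ := fun n => ∑ j ∈ Finset.range (n + 1), ((n - j : ℕ) : ℂ) * phiC z n j with hK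
  set G : ℕ → ℂ := fun n => ∑ j ∈ Finset.range (n + 1),
    (Complex.I * z - ((n - j : ℕ) : ℂ)) * phiC z n j with hG
  set E : ℕ → ℂ := fun n => (-Complex.I) ^ (n + 1) * Complex.exp (Complex.I * z) *
    (dcoef n n / z ^ (n + 1)) with hE
  have hEne : ∀ n, E n ≠ 0 := fun n =>
    mul_ne_zero (mul_ne_zero (pow_ne_zero _ (neg_ne_zero.mpr Complex.I_ne_zero))
      (Complex.exp_ne_zero _)) (div_ne_zero (dcoef_ne n n) (pow_ne_zero _ hz))
  have hH : ∀ n, sphHankel n z = E n * F n := by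
    intro n
    rw [sphHankel_eq n z hz]
    have h1 : ∑ k ∈ Finset.range (n + 1),
        (-Complex.I) ^ (n + 1) * dcoef n k * (Complex.exp (Complex.I * z) / z ^ (k + 1)) =
        ((-Complex.I) ^ (n + 1) * Complex.exp (Complex.I * z)) *
          ∑ k ∈ Finset.range (n + 1), dcoef n k * (fun _ : ℕ => (1 : ℂ)) k / z ^ (k + 1) := by
      rw [Finset.mul_sum]
      exact Finset.sum_congr rfl fun k _ => by simp only []; ring
    rw [h1, sum_reindex z hz n (fun _ => 1)]
    simp only [one_mul, hE, hF]
    ring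
  have hZ : ∀ n, zfun n z = E n * G n := by
    intro n
    rw [zfun_eq n z hz]
    have h1 : ∑ k ∈ Finset.range (n + 1),
        (-Complex.I) ^ (n + 1) * dcoef n k *
          (Complex.exp (Complex.I * z) * (Complex.I * z - k) / z ^ (k + 1)) =
        ((-Complex.I) ^ (n + 1) * Complex.exp (Complex.I * z)) *
          ∑ k ∈ Finset.range (n + 1),
            dcoef n k * (fun k : ℕ => Complex.I * z - (k : ℂ)) k / z ^ (k + 1) := by
      rw [Finset.mul_sum]
      exact Finset.sum_congr rfl fun k _ => by simp only []; ring
    rw [h1, sum_reindex z hz n (fun k : ℕ => Complex.I * z - (k : ℂ))]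
    simp only [hE, hG]
    ring
  have hGsplit : ∀ n, G n = Complex.I * z * F n - K n := by
    intro n
    simp only [hG, hF, hK, Finset.mul_sum, ← Finset.sum_sub_distrib]
    exact Finset.sum_congr rfl fun j _ => by ring
  have hKdiv : ∀ n, K n / (n : ℂ) =
      ∑ j ∈ Finset.range (n + 1), (((n - j : ℕ) : ℂ) / (n : ℂ)) * phiC z n j := by
    intro n
    simp only [hK, Finset.sum_div]
    exact Finset.sum_congr rfl fun j _ => by ring
  have hFlim := tendsto_F z
  have hexp_ne : Complex.exp (-(Complex.I * z)) ≠ 0 := Complex.exp_ne_zero _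
  have hKlim : Tendsto (fun n : ℕ => K n / (n : ℂ)) atTop
      (nhds (Complex.exp (-(Complex.I * z)))) := by
    apply (tendsto_K z).congr
    intro n
    exact (hKdiv n).symm
  have hFne : ∀ᶠ n in atTop, F n ≠ 0 := hFlim.eventually_ne hexp_ne
  have hratio : Tendsto (fun n : ℕ => Complex.I * z * ((n : ℂ))⁻¹ - (K n / (n : ℂ)) / F n)
      atTop (nhds (-1)) := by
    have t1 : Tendsto (fun n : ℕ => Complex.I * z * ((n : ℂ))⁻¹) atTop (nhds 0) := by
      simpa using tendsto_inv_nat_complex.const_mul (Complex.I * z)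
    have t2 : Tendsto (fun n : ℕ => (K n / (n : ℂ)) / F n) atTop (nhds 1) := by
      have := hKlim.div hFlim hexp_ne
      simpa [div_self hexp_ne, Pi.div_def] using this
    have := t1.sub t2
    simpa using this
  have heq : ∀ᶠ n in atTop, zfun n z / ((n : ℂ) * sphHankel n z) =
      Complex.I * z * ((n : ℂ))⁻¹ - (K n / (n : ℂ)) / F n := by
    filter_upwards [hFne, eventually_ge_atTop 1] with n hFn hn1
    have hn0 : (n : ℂ) ≠ 0 := Nat.cast_ne_zero.mpr (by omega)
    rw [hH n, hZ n, hGsplit n]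
    exact ratio_algebra (E n) (F n) (K n) (Complex.I * z) (n : ℂ) (hEne n) hFn hn0
  have hT : Tendsto (fun n : ℕ => zfun n z / ((n : ℂ) * sphHankel n z)) atTop (nhds (-1)) :=
    hratio.congr' (heq.mono fun n h => h.symm)
  have hne0 : ∀ᶠ n in atTop, zfun n z / ((n : ℂ) * sphHankel n z) ≠ 0 :=
    hT.eventually_ne (by norm_num)
  obtain ⟨N₀, hN⟩ := eventually_atTop.mp (hFne.and hne0)
  exact ⟨N₀, fun n hn => by
    obtain ⟨hFn, hq⟩ := hN n hn
    have hsp : sphHankel n z ≠ 0 := by rw [hH n]; exact mul_ne_zero (hEne n) hFn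
    refine ⟨hsp, fun h0 => ?_⟩
    rw [h0, zero_div] at hq
    exact hq rfl, hT⟩
end

section
/- Let κ = κ₁ + iκ₂ ∈ ℂ with κ₂ < 0, let X ≥ 0 and Y ≥ 0 be real numbers, and let S ∈ ℂ with Re(S) ≤ 0. Then |(1/(iκ))·X + (iκ)·Y − S| ≥ min{1, 1/|κ|²} · |κ₂| · (X + Y). -/
open Complex

theorem infSup_core_inequality (κ : ℂ) (hκ : κ.im < 0) (X Y : ℝ)
    (hX : 0 ≤ X) (hY : 0 ≤ Y) (S : ℂ) (hS : S.re ≤ 0) :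
    min 1 (1 / ‖κ‖ ^ 2) * |κ.im| * (X + Y) ≤
      ‖1 / (Complex.I * κ) * (X : ℂ) + Complex.I * κ * (Y : ℂ) - S‖ := by
  have hκ0 : κ ≠ 0 := fun h => by simp [h] at hκ
  set z := 1 / (Complex.I * κ) * (X : ℂ) + Complex.I * κ * (Y : ℂ) - S with hz
  have h1 : z.re ≤ ‖z‖ := Complex.re_le_norm z
  refine le_trans ?_ h1
  have hN : (0:ℝ) < κ.re ^ 2 + κ.im ^ 2 := by nlinarith [sq_nonneg κ.re, sq_nonneg κ.im]
  have habs : ‖κ‖ ^ 2 = κ.re ^ 2 + κ.im ^ 2 := by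
    rw [Complex.sq_norm, Complex.normSq_apply]; ring
  have hre : z.re = (-κ.im) * X / (κ.re ^ 2 + κ.im ^ 2) + (-κ.im) * Y - S.re := by
    rw [hz]
    have hN' : κ.im ^ 2 + κ.re ^ 2 ≠ 0 := by nlinarith
    simp [Complex.div_re, Complex.normSq_apply, Complex.mul_re, Complex.mul_im]
    ring
  rw [hre, habs, abs_of_neg hκ]
  have hmin1 : min 1 (1 / (κ.re ^ 2 + κ.im ^ 2)) ≤ 1 := min_le_left _ _
  have hmin2 : min 1 (1 / (κ.re ^ 2 + κ.im ^ 2)) ≤ 1 / (κ.re ^ 2 + κ.im ^ 2) :=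
    min_le_right _ _
  have hb : 0 < -κ.im := by linarith
  have hX' : min 1 (1 / (κ.re ^ 2 + κ.im ^ 2)) * (-κ.im) * X ≤ (-κ.im) * X / (κ.re ^ 2 + κ.im ^ 2) := by
    have heq : (-κ.im) * X / (κ.re ^ 2 + κ.im ^ 2) = 1 / (κ.re ^ 2 + κ.im ^ 2) * ((-κ.im) * X) := by
      ring
    rw [heq, mul_assoc]
    exact mul_le_mul_of_nonneg_right hmin2 (mul_nonneg hb.le hX)
  have hY' : min 1 (1 / (κ.re ^ 2 + κ.im ^ 2)) * (-κ.im) * Y ≤ (-κ.im) * Y := by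
    rw [mul_assoc]
    calc min 1 (1 / (κ.re ^ 2 + κ.im ^ 2)) * ((-κ.im) * Y) ≤ 1 * ((-κ.im) * Y) :=
          mul_le_mul_of_nonneg_right hmin1 (mul_nonneg hb.le hY)
      _ = (-κ.im) * Y := one_mul _
  nlinarith
end

section
/- Let w ∈ ℂ with w ≠ 0 and suppose h_n^{(1)}(w) ≠ 0 and z_n^{(1)}(w) ≠ 0 for all integers n ≥ 1. Let s > 0. Then there exists a constant C > 0, depending only on w and s, such that for every integer N ≥ 1 and all families of complex numbers (a_n^m) and (b_n^m), indexed by integers n ≥ 1 and −n ≤ m ≤ n, one has ∑_{n=N+1}^{∞} ∑_{m=−n}^{n} [ (n(n+1))^{1/2} · |w·h_n^{(1)}(w)/z_n^{(1)}(w)|² · |a_n^m|² + (n(n+1))^{−1/2} · |z_n^{(1)}(w)/(w·h_n^{(1)}(w))|² · |b_n^m|² ] ≤ (C/N^s) · ∑_{n=N+1}^{∞} ∑_{m=−n}^{n} [ (n(n+1))^{s−1/2} · |a_n^m|² + (n(n+1))^{s+1/2} · |b_n^m|² ], where both sides are sums of nonnegative extended reals. -/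
open Complex NNReal ENNReal

/-- `n(n+1)` as a nonnegative extended real. -/
noncomputable def lam (n : ℕ) : ℝ≥0∞ := ((n * (n + 1) : ℕ) : ℝ≥0∞)

namespace DtnAux

open Finset Filter

noncomputable def acoef (n k : ℕ) : ℂ :=
  Complex.I ^ k * (Nat.factorial (n + k) : ℂ) /
    ((Nat.factorial k : ℂ) * 2 ^ k * (Nat.factorial (n - k) : ℂ))

lemma sphHankel_eq (n : ℕ) {z : ℂ} (hz : z ≠ 0) :
    sphHankel n z = (-Complex.I) ^ (n + 1) * (Complex.exp (Complex.I * z) *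
      ∑ k ∈ range (n + 1), acoef n k * (z ^ (k + 1))⁻¹) := by
  unfold sphHankel acoef
  rw [Finset.mul_sum, Finset.mul_sum, Finset.mul_sum]
  refine Finset.sum_congr rfl fun k _ => ?_
  have h1 : (Nat.factorial k : ℂ) ≠ 0 := Nat.cast_ne_zero.2 (Nat.factorial_ne_zero _)
  have h2 : (Nat.factorial (n - k) : ℂ) ≠ 0 := Nat.cast_ne_zero.2 (Nat.factorial_ne_zero _)
  simp only [div_eq_mul_inv, mul_pow, mul_inv, inv_pow, pow_succ]
  ring

lemma hasDerivAt_G (n : ℕ) {z : ℂ} (hz : z ≠ 0) :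
    HasDerivAt (fun y => (-Complex.I) ^ (n + 1) * (Complex.exp (Complex.I * y) *
      ∑ k ∈ range (n + 1), acoef n k * (y ^ (k + 1))⁻¹))
      ((-Complex.I) ^ (n + 1) * ((Complex.exp (Complex.I * z) * Complex.I) *
        (∑ k ∈ range (n + 1), acoef n k * (z ^ (k + 1))⁻¹) +
        Complex.exp (Complex.I * z) *
        ∑ k ∈ range (n + 1), acoef n k *
          (-(((k : ℂ) + 1) * z ^ k) / (z ^ (k + 1)) ^ 2))) z := by
  apply HasDerivAt.const_mul
  have hexp : HasDerivAt (fun y : ℂ => Complex.exp (Complex.I * y))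
      (Complex.exp (Complex.I * z) * Complex.I) z := by
    have h := (Complex.hasDerivAt_exp (Complex.I * z)).comp z
      ((hasDerivAt_id z).const_mul Complex.I)
    exact h.congr_deriv (by ring)
  have hsum : HasDerivAt (fun y : ℂ => ∑ k ∈ range (n + 1), acoef n k * (y ^ (k + 1))⁻¹)
      (∑ k ∈ range (n + 1), acoef n k * (-(((k : ℂ) + 1) * z ^ k) / (z ^ (k + 1)) ^ 2)) z := by
    apply HasDerivAt.fun_sum
    intro k _
    have h := ((hasDerivAt_pow (k + 1) z).inv (pow_ne_zero _ hz)).const_mul (acoef n k)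
    refine h.congr_deriv ?_
    push_cast [Nat.add_sub_cancel]
    ring
  exact hexp.mul hsum

lemma deriv_sphHankel (n : ℕ) {z : ℂ} (hz : z ≠ 0) :
    deriv (sphHankel n) z = (-Complex.I) ^ (n + 1) * ((Complex.exp (Complex.I * z) * Complex.I) *
        (∑ k ∈ range (n + 1), acoef n k * (z ^ (k + 1))⁻¹) +
        Complex.exp (Complex.I * z) *
        ∑ k ∈ range (n + 1), acoef n k *
          (-(((k : ℂ) + 1) * z ^ k) / (z ^ (k + 1)) ^ 2)) := by
  have hev : sphHankel n =ᶠ[nhds z] (fun y => (-Complex.I) ^ (n + 1) *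
      (Complex.exp (Complex.I * y) * ∑ k ∈ range (n + 1), acoef n k * (y ^ (k + 1))⁻¹)) := by
    filter_upwards [eventually_ne_nhds hz] with y hy
    exact sphHankel_eq n hy
  rw [hev.deriv_eq, (hasDerivAt_G n hz).deriv]

lemma zfun_eq (n : ℕ) {w : ℂ} (hw : w ≠ 0) :
    zfun n w = (-Complex.I) ^ (n + 1) * Complex.exp (Complex.I * w) *
      ∑ k ∈ range (n + 1), acoef n k *
        (Complex.I * (w ^ k)⁻¹ - (k : ℂ) * (w ^ (k + 1))⁻¹) := by
  rw [zfun, deriv_sphHankel n hw, sphHankel_eq n hw]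
  have hsum : ∑ k ∈ range (n + 1), acoef n k *
        (Complex.I * (w ^ k)⁻¹ - (k : ℂ) * (w ^ (k + 1))⁻¹)
      = (∑ k ∈ range (n + 1), acoef n k * (w ^ (k + 1))⁻¹)
        + Complex.I * w * (∑ k ∈ range (n + 1), acoef n k * (w ^ (k + 1))⁻¹)
        + w * (∑ k ∈ range (n + 1), acoef n k *
            (-(((k : ℂ) + 1) * w ^ k) / (w ^ (k + 1)) ^ 2)) := by
    rw [Finset.mul_sum, Finset.mul_sum, ← Finset.sum_add_distrib, ← Finset.sum_add_distrib]
    refine Finset.sum_congr rfl fun k _ => ?_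
    have h3 : w ^ k ≠ 0 := pow_ne_zero _ hw
    field_simp
    ring
  rw [hsum]
  ring

noncomputable def tcoef (w : ℂ) (n j : ℕ) : ℂ :=
  (Complex.I⁻¹ * w) ^ j / (Nat.factorial j : ℂ) *
    (2 ^ j * (n.descFactorial j : ℂ) / ((2 * n).descFactorial j : ℂ))

lemma acoef_reflect (d j : ℕ) (w : ℂ) :
    acoef (d + j) d * w ^ j = acoef (d + j) (d + j) * tcoef w (d + j) j := by
  have e1 : (Nat.factorial d : ℂ) * ((d + j).descFactorial j : ℂ) = (Nat.factorial (d + j) : ℂ) := by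
    have h := Nat.factorial_mul_descFactorial (Nat.le_add_left j d)
    rw [Nat.add_sub_cancel] at h
    exact_mod_cast h
  have e2 : (Nat.factorial (d + j + d) : ℂ) * ((2 * (d + j)).descFactorial j : ℂ)
      = (Nat.factorial (2 * (d + j)) : ℂ) := by
    have h := Nat.factorial_mul_descFactorial (show j ≤ 2 * (d + j) by omega)
    have h2 : 2 * (d + j) - j = d + j + d := by omega
    rw [h2] at h
    exact_mod_cast h
  have hdF : ((2 * (d + j)).descFactorial j : ℂ) ≠ 0 := by
    rw [Nat.cast_ne_zero]
    intro h0
    rw [Nat.descFactorial_eq_zero_iff_lt] at h0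
    omega
  have hfac : ∀ m : ℕ, (Nat.factorial m : ℂ) ≠ 0 :=
    fun m => Nat.cast_ne_zero.2 (Nat.factorial_ne_zero m)
  unfold acoef tcoef
  rw [Nat.add_sub_cancel_left, Nat.sub_self, Nat.factorial_zero]
  have h3 : d + j + (d + j) = 2 * (d + j) := by ring
  rw [h3]
  have hdF2 : ((d + j).descFactorial j : ℂ) ≠ 0 := by
    rw [Nat.cast_ne_zero]
    intro h0
    rw [Nat.descFactorial_eq_zero_iff_lt] at h0
    omega
  have hIj : (Complex.I : ℂ) ^ j ≠ 0 := pow_ne_zero _ Complex.I_ne_zero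
  simp only [mul_pow, inv_pow, pow_add]
  rw [← e2, ← e1]
  field_simp [Complex.I_ne_zero, hdF, hdF2, hfac 0, hfac d, hfac j, hfac (d+j)]
  ring

noncomputable def Tf (w : ℂ) (n : ℕ) : ℂ := ∑ j ∈ range (n + 1), tcoef w n j
noncomputable def Vf (w : ℂ) (n : ℕ) : ℂ := ∑ j ∈ range (n + 1), (j : ℂ) * tcoef w n j
noncomputable def Ef (w : ℂ) (n : ℕ) : ℂ :=
  (-Complex.I) ^ (n + 1) * Complex.exp (Complex.I * w) * (acoef n n * (w ^ (n + 1))⁻¹)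

lemma sum_reflect_T (n : ℕ) {w : ℂ} (hw : w ≠ 0) :
    ∑ k ∈ range (n + 1), acoef n k * (w ^ (k + 1))⁻¹
      = acoef n n * (w ^ (n + 1))⁻¹ * Tf w n := by
  rw [Tf, Finset.mul_sum, ← Finset.sum_range_reflect (fun j => acoef n j * (w ^ (j + 1))⁻¹)]
  refine Finset.sum_congr rfl fun j hj => ?_
  rw [Finset.mem_range] at hj
  have hj' : j ≤ n := by omega
  obtain ⟨d, hd⟩ : ∃ d, n = d + j := ⟨n - j, by omega⟩
  subst hd
  simp only [Nat.add_sub_cancel, Nat.add_sub_cancel_left]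
  have h := acoef_reflect d j w
  have hwd : w ^ (d + 1) ≠ 0 := pow_ne_zero _ hw
  have hwj : w ^ j ≠ 0 := pow_ne_zero _ hw
  have expand : w ^ (d + j + 1) = w ^ (d + 1) * w ^ j := by rw [← pow_add]; ring_nf
  calc acoef (d + j) d * (w ^ (d + 1))⁻¹
      = (acoef (d + j) d * w ^ j) * ((w ^ (d + 1))⁻¹ * (w ^ j)⁻¹) := by
        field_simp
    _ = acoef (d + j) (d + j) * (w ^ (d + j + 1))⁻¹ * tcoef w (d + j) j := by
        rw [h, expand, mul_inv]; ring

lemma sum_reflect_Z (n : ℕ) {w : ℂ} (hw : w ≠ 0) :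
    ∑ k ∈ range (n + 1), acoef n k *
        (Complex.I * (w ^ k)⁻¹ - (k : ℂ) * (w ^ (k + 1))⁻¹)
      = acoef n n * (w ^ (n + 1))⁻¹ * ((Complex.I * w - n) * Tf w n + Vf w n) := by
  have hrhs : acoef n n * (w ^ (n + 1))⁻¹ * ((Complex.I * w - n) * Tf w n + Vf w n)
      = ∑ j ∈ range (n + 1), acoef n n * (w ^ (n + 1))⁻¹ *
          ((Complex.I * w - ((n : ℂ) - j)) * tcoef w n j) := by
    rw [Tf, Vf]
    rw [Finset.mul_sum]
    rw [← Finset.sum_add_distrib]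
    rw [Finset.mul_sum]
    exact Finset.sum_congr rfl fun j hj => by ring
  rw [hrhs, ← Finset.sum_range_reflect (fun k => acoef n k *
      (Complex.I * (w ^ k)⁻¹ - (k : ℂ) * (w ^ (k + 1))⁻¹))]
  refine Finset.sum_congr rfl fun j hj => ?_
  rw [Finset.mem_range] at hj
  have hj' : j ≤ n := by omega
  obtain ⟨d, hd⟩ : ∃ d, n = d + j := ⟨n - j, by omega⟩
  subst hd
  simp only [Nat.add_sub_cancel, Nat.add_sub_cancel_left]
  have h := acoef_reflect d j w
  have hwd : w ^ d ≠ 0 := pow_ne_zero _ hw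
  have hwd1 : w ^ (d + 1) ≠ 0 := pow_ne_zero _ hw
  have hwj : w ^ j ≠ 0 := pow_ne_zero _ hw
  have hcast : ((d : ℂ) + j) - j = (d : ℂ) := by ring
  push_cast
  have expand : w ^ (d + j + 1) = w ^ (d + 1) * w ^ j := by rw [← pow_add]; ring_nf
  have step1 : acoef (d + j) d * (Complex.I * (w ^ d)⁻¹ - (d : ℂ) * (w ^ (d + 1))⁻¹)
      = (acoef (d + j) d * w ^ j) * ((Complex.I * w - d) * ((w ^ (d + 1))⁻¹ * (w ^ j)⁻¹)) := by
    have hpow : w ^ (d + 1) = w ^ d * w := pow_succ w d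
    field_simp
    ring
  rw [step1, h, expand, mul_inv]
  ring

lemma Ef_ne_zero (n : ℕ) {w : ℂ} (hw : w ≠ 0) : Ef w n ≠ 0 := by
  have hfac : ∀ m : ℕ, (Nat.factorial m : ℂ) ≠ 0 :=
    fun m => Nat.cast_ne_zero.2 (Nat.factorial_ne_zero m)
  have ha : acoef n n ≠ 0 := by
    unfold acoef
    apply div_ne_zero
    · exact mul_ne_zero (pow_ne_zero _ Complex.I_ne_zero) (hfac _)
    · exact mul_ne_zero (mul_ne_zero (hfac _) (pow_ne_zero _ two_ne_zero)) (hfac _)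
  exact mul_ne_zero (mul_ne_zero (pow_ne_zero _ (neg_ne_zero.2 Complex.I_ne_zero))
    (Complex.exp_ne_zero _)) (mul_ne_zero ha (inv_ne_zero (pow_ne_zero _ hw)))

lemma sphHankel_repr (n : ℕ) {w : ℂ} (hw : w ≠ 0) :
    sphHankel n w = Ef w n * Tf w n := by
  rw [sphHankel_eq n hw, sum_reflect_T n hw, Ef]
  ring

lemma zfun_repr (n : ℕ) {w : ℂ} (hw : w ≠ 0) :
    zfun n w = Ef w n * ((Complex.I * w - n) * Tf w n + Vf w n) := by
  rw [zfun_eq n hw, sum_reflect_Z n hw, Ef]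
  ring

/-- `2^j * n.descFactorial j ≤ (2n).descFactorial j`. -/
lemma two_pow_descFactorial_le (n : ℕ) : ∀ j : ℕ, 2 ^ j * n.descFactorial j ≤ (2 * n).descFactorial j := by
  intro j
  induction j with
  | zero => simp
  | succ j ih =>
    rw [Nat.descFactorial_succ, Nat.descFactorial_succ]
    calc 2 ^ (j + 1) * ((n - j) * n.descFactorial j)
        = (2 * (n - j)) * (2 ^ j * n.descFactorial j) := by ring
      _ ≤ (2 * n - j) * ((2 * n).descFactorial j) :=
          Nat.mul_le_mul (by omega) ih

/-- key counting estimate:  `n * D j ≤ j^2 * D j + n * E j` with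
`D j = (2n).descFactorial j`, `E j = 2^j * n.descFactorial j`. -/
lemma nat_key (n : ℕ) : ∀ j : ℕ, j ≤ n →
    n * (2 * n).descFactorial j ≤ j ^ 2 * (2 * n).descFactorial j + n * (2 ^ j * n.descFactorial j) := by
  intro j
  induction j with
  | zero => simp
  | succ j ih =>
    intro hj
    have ih' := ih (by omega)
    rw [Nat.descFactorial_succ, Nat.descFactorial_succ]
    have hE : 2 ^ j * n.descFactorial j ≤ (2 * n).descFactorial j := two_pow_descFactorial_le n j
    set D := (2 * n).descFactorial j with hD
    set E := 2 ^ j * n.descFactorial j with hEd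
    have key1 : n * ((2 * n - j) * D) ≤ (2 * n - j) * (j ^ 2 * D + n * E) :=
      by calc n * ((2 * n - j) * D) = (2 * n - j) * (n * D) := by ring
        _ ≤ (2 * n - j) * (j ^ 2 * D + n * E) := Nat.mul_le_mul_left _ ih'
    have key2 : (2 * n - j) * (j ^ 2 * D) + (2 * n - j) * (n * E)
        ≤ (j + 1) ^ 2 * ((2 * n - j) * D) + n * (2 ^ (j + 1) * ((n - j) * n.descFactorial j)) := by
      have hsplit : (2 * n - j) * (n * E) = n * (2 ^ (j+1) * ((n - j) * n.descFactorial j)) + j * (n * E) := by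
        have h1 : 2 * n - j = 2 * (n - j) + j := by omega
        rw [h1, hEd, pow_succ]
        ring
      rw [hsplit]
      have h2 : j * (n * E) ≤ (2 * j + 1) * ((2 * n - j) * D) := by
        have : n ≤ 2 * n - j := by omega
        calc j * (n * E) ≤ (2 * j + 1) * ((2 * n - j) * E) :=
              Nat.mul_le_mul (by omega) (Nat.mul_le_mul this (le_refl E))
          _ ≤ (2 * j + 1) * ((2 * n - j) * D) :=
              Nat.mul_le_mul_left _ (Nat.mul_le_mul_left _ hE)
      calc (2 * n - j) * (j ^ 2 * D) + (n * (2 ^ (j+1) * ((n - j) * n.descFactorial j)) + j * (n * E))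
          ≤ (2 * n - j) * (j ^ 2 * D) + (n * (2 ^ (j+1) * ((n - j) * n.descFactorial j)) + (2 * j + 1) * ((2 * n - j) * D)) := by
            omega
        _ = (j + 1) ^ 2 * ((2 * n - j) * D) + n * (2 ^ (j + 1) * ((n - j) * n.descFactorial j)) := by ring
    calc n * ((2 * n - j) * D) ≤ (2 * n - j) * (j ^ 2 * D + n * E) := key1
      _ = (2 * n - j) * (j ^ 2 * D) + (2 * n - j) * (n * E) := by ring
      _ ≤ (j + 1) ^ 2 * ((2 * n - j) * D) + n * (2 ^ (j + 1) * ((n - j) * n.descFactorial j)) := key2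

lemma norm_I_inv_mul (w : ℂ) : ‖Complex.I⁻¹ * w‖ = ‖w‖ := by
  rw [norm_mul, norm_inv, Complex.norm_I, inv_one, one_mul]

lemma ratio_cast (n j : ℕ) :
    (2 : ℂ) ^ j * (n.descFactorial j : ℂ) / ((2 * n).descFactorial j : ℂ)
      = (((((2 ^ j * n.descFactorial j : ℕ) : ℝ)) / (((2 * n).descFactorial j : ℕ) : ℝ) : ℝ) : ℂ) := by
  push_cast
  ring

lemma ratio_nonneg (n j : ℕ) :
    0 ≤ (((2 ^ j * n.descFactorial j : ℕ) : ℝ)) / (((2 * n).descFactorial j : ℕ) : ℝ) := by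
  positivity

lemma ratio_le_one (n j : ℕ) :
    (((2 ^ j * n.descFactorial j : ℕ) : ℝ)) / (((2 * n).descFactorial j : ℕ) : ℝ) ≤ 1 := by
  rcases Nat.eq_zero_or_pos ((2 * n).descFactorial j) with h0 | hpos
  · rw [h0]; norm_num
  · rw [div_le_one (by exact_mod_cast hpos)]
    exact_mod_cast two_pow_descFactorial_le n j

lemma tcoef_norm_le (w : ℂ) (n j : ℕ) :
    ‖tcoef w n j‖ ≤ ‖w‖ ^ j / (Nat.factorial j : ℝ) := by
  unfold tcoef
  rw [ratio_cast, norm_mul, norm_div, norm_pow, norm_I_inv_mul, Complex.norm_real,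
    Complex.norm_natCast]
  rw [Real.norm_eq_abs, _root_.abs_of_nonneg (ratio_nonneg n j)]
  calc ‖w‖ ^ j / (Nat.factorial j : ℝ) * _ ≤ ‖w‖ ^ j / (Nat.factorial j : ℝ) * 1 := by
        refine mul_le_mul_of_nonneg_left (ratio_le_one n j) (by positivity)
    _ = ‖w‖ ^ j / (Nat.factorial j : ℝ) := mul_one _

lemma tcoef_sub_norm_le (w : ℂ) {n j : ℕ} (hj : j ≤ n) (hn : 1 ≤ n) :
    ‖tcoef w n j - (Complex.I⁻¹ * w) ^ j / (Nat.factorial j : ℂ)‖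
      ≤ ((j : ℝ) ^ 2 * ‖w‖ ^ j / (Nat.factorial j : ℝ)) / n := by
  have hDpos : (0 : ℝ) < (((2 * n).descFactorial j : ℕ) : ℝ) := by
    have : (2 * n).descFactorial j ≠ 0 := by
      intro h0; rw [Nat.descFactorial_eq_zero_iff_lt] at h0; omega
    exact_mod_cast Nat.pos_of_ne_zero this
  have hnpos : (0 : ℝ) < (n : ℝ) := by exact_mod_cast hn
  set r : ℝ := (((2 ^ j * n.descFactorial j : ℕ) : ℝ)) / (((2 * n).descFactorial j : ℕ) : ℝ) with hr
  have hsplit : tcoef w n j - (Complex.I⁻¹ * w) ^ j / (Nat.factorial j : ℂ)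
      = (Complex.I⁻¹ * w) ^ j / (Nat.factorial j : ℂ) * ((r : ℂ) - 1) := by
    rw [tcoef, ratio_cast]
    ring
  rw [hsplit, norm_mul, norm_div, norm_pow, norm_I_inv_mul, Complex.norm_natCast]
  have habs : ‖((r : ℂ) - 1)‖ = 1 - r := by
    rw [show ((r : ℂ) - 1) = ((r - 1 : ℝ) : ℂ) by push_cast; ring, Complex.norm_real,
      Real.norm_eq_abs, _root_.abs_of_nonpos (by linarith [ratio_le_one n j]), neg_sub]
  rw [habs]
  have hkey : 1 - r ≤ (j : ℝ) ^ 2 / n := by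
    have hnat := nat_key n j hj
    have hcast : (n : ℝ) * (((2 * n).descFactorial j : ℕ) : ℝ)
        ≤ (j : ℝ) ^ 2 * (((2 * n).descFactorial j : ℕ) : ℝ)
          + (n : ℝ) * (((2 ^ j * n.descFactorial j : ℕ) : ℝ)) := by exact_mod_cast hnat
    rw [hr, sub_div' hDpos.ne', div_le_div_iff₀ hDpos hnpos]
    nlinarith [hcast]
  calc ‖w‖ ^ j / (Nat.factorial j : ℝ) * (1 - r)
      ≤ ‖w‖ ^ j / (Nat.factorial j : ℝ) * ((j : ℝ) ^ 2 / n) :=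
        mul_le_mul_of_nonneg_left hkey (by positivity)
    _ = ((j : ℝ) ^ 2 * ‖w‖ ^ j / (Nat.factorial j : ℝ)) / n := by ring

lemma summable_sq_pow_div_factorial {c : ℝ} (hc : 0 ≤ c) :
    Summable (fun j : ℕ => (j : ℝ) ^ 2 * c ^ j / (Nat.factorial j : ℝ)) := by
  apply summable_of_ratio_norm_eventually_le (r := 1/2) (by norm_num)
  filter_upwards [Filter.eventually_ge_atTop (⌈4 * c⌉₊ + 2)] with j hj
  have hj' : 4 * c + 2 ≤ (j : ℝ) := by
    have h1 : 4 * c ≤ (⌈4 * c⌉₊ : ℝ) := Nat.le_ceil _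
    have h2 : ((⌈4 * c⌉₊ + 2 : ℕ) : ℝ) ≤ (j : ℝ) := by exact_mod_cast hj
    push_cast at h2
    linarith
  have hfac : (0 : ℝ) < (Nat.factorial j : ℝ) := by
    exact_mod_cast Nat.factorial_pos j
  rw [Real.norm_eq_abs, Real.norm_eq_abs, _root_.abs_of_nonneg (by positivity),
    _root_.abs_of_nonneg (by positivity)]
  have h1 : ((Nat.factorial (j + 1) : ℕ) : ℝ) = ((j : ℝ) + 1) * (Nat.factorial j : ℝ) := by
    rw [Nat.factorial_succ]; push_cast; ring
  have h2 : (1 : ℝ)/2 * ((j : ℝ) ^ 2 * c ^ j / (Nat.factorial j : ℝ))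
      = (j : ℝ) ^ 2 * c ^ j / (2 * (Nat.factorial j : ℝ)) := by ring
  rw [h1, h2]
  have hkey : 2 * (((j : ℝ) + 1) ^ 2 * c) ≤ (j : ℝ) ^ 2 * ((j : ℝ) + 1) := by
    nlinarith [hj', sq_nonneg ((j : ℝ) - 2), sq_nonneg ((j : ℝ) + 1), hc]
  rw [div_le_div_iff₀ (by positivity) (by positivity)]
  have hc2 : (0 : ℝ) ≤ c ^ j * (Nat.factorial j : ℝ) := by positivity
  push_cast
  calc ((j : ℝ) + 1) ^ 2 * c ^ (j + 1) * (2 * (Nat.factorial j : ℝ))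
      = (2 * (((j : ℝ) + 1) ^ 2 * c)) * (c ^ j * (Nat.factorial j : ℝ)) := by rw [pow_succ]; ring
    _ ≤ ((j : ℝ) ^ 2 * ((j : ℝ) + 1)) * (c ^ j * (Nat.factorial j : ℝ)) :=
        mul_le_mul_of_nonneg_right hkey hc2
    _ = (j : ℝ) ^ 2 * c ^ j * (((j : ℝ) + 1) * (Nat.factorial j : ℝ)) := by ring

noncomputable def Kc (w : ℂ) : ℝ := ∑' j : ℕ, (j : ℝ) ^ 2 * ‖w‖ ^ j / (Nat.factorial j : ℝ)

lemma Kc_nonneg (w : ℂ) : 0 ≤ Kc w :=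
  tsum_nonneg fun j => by positivity

lemma Tf_sub_partial (w : ℂ) {n : ℕ} (hn : 1 ≤ n) :
    ‖Tf w n - ∑ j ∈ range (n + 1), (Complex.I⁻¹ * w) ^ j / (Nat.factorial j : ℂ)‖
      ≤ Kc w / n := by
  rw [Tf, ← Finset.sum_sub_distrib]
  calc ‖∑ j ∈ range (n + 1), (tcoef w n j - (Complex.I⁻¹ * w) ^ j / (Nat.factorial j : ℂ))‖
      ≤ ∑ j ∈ range (n + 1), ‖tcoef w n j - (Complex.I⁻¹ * w) ^ j / (Nat.factorial j : ℂ)‖ :=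
        norm_sum_le _ _
    _ ≤ ∑ j ∈ range (n + 1), ((j : ℝ) ^ 2 * ‖w‖ ^ j / (Nat.factorial j : ℝ)) / n := by
        refine Finset.sum_le_sum fun j hj => ?_
        rw [Finset.mem_range] at hj
        exact tcoef_sub_norm_le w (by omega : j ≤ n) hn
    _ = (∑ j ∈ range (n + 1), (j : ℝ) ^ 2 * ‖w‖ ^ j / (Nat.factorial j : ℝ)) / n := by
        rw [Finset.sum_div]
    _ ≤ Kc w / n := by
        have hK : ∑ j ∈ range (n + 1), (j : ℝ) ^ 2 * ‖w‖ ^ j / (Nat.factorial j : ℝ) ≤ Kc w :=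
          Summable.sum_le_tsum _ (fun j _ => by positivity)
            (summable_sq_pow_div_factorial (norm_nonneg w))
        gcongr

lemma tendsto_Tf (w : ℂ) :
    Filter.Tendsto (Tf w) Filter.atTop (nhds (Complex.exp (Complex.I⁻¹ * w))) := by
  have hsum : HasSum (fun j : ℕ => (Complex.I⁻¹ * w) ^ j / (Nat.factorial j : ℂ))
      (Complex.exp (Complex.I⁻¹ * w)) := by
    have hs := NormedSpace.expSeries_div_summable (Complex.I⁻¹ * w)
    have h2 := hs.hasSum
    rwa [show (∑' j : ℕ, (Complex.I⁻¹ * w) ^ j / (Nat.factorial j : ℂ))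
        = Complex.exp (Complex.I⁻¹ * w) by
      rw [Complex.exp_eq_exp_ℂ, NormedSpace.exp_eq_tsum_div]] at h2
  have hpart : Filter.Tendsto
      (fun n : ℕ => ∑ j ∈ range (n + 1), (Complex.I⁻¹ * w) ^ j / (Nat.factorial j : ℂ))
      Filter.atTop (nhds (Complex.exp (Complex.I⁻¹ * w))) :=
    (hsum.tendsto_sum_nat).comp (tendsto_add_atTop_nat 1)
  have hdiff : Filter.Tendsto
      (fun n : ℕ => Tf w n - ∑ j ∈ range (n + 1), (Complex.I⁻¹ * w) ^ j / (Nat.factorial j : ℂ))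
      Filter.atTop (nhds 0) := by
    apply squeeze_zero_norm' (a := fun n : ℕ => Kc w / n)
    · filter_upwards [Filter.eventually_ge_atTop 1] with n hn
      exact Tf_sub_partial w hn
    · exact tendsto_const_div_atTop_nhds_zero_nat (Kc w)
  have := hpart.add hdiff
  rw [add_zero] at this
  convert this using 2 with n
  ring

lemma Vf_norm_le (w : ℂ) (n : ℕ) : ‖Vf w n‖ ≤ Kc w := by
  rw [Vf]
  calc ‖∑ j ∈ range (n + 1), (j : ℂ) * tcoef w n j‖
      ≤ ∑ j ∈ range (n + 1), ‖(j : ℂ) * tcoef w n j‖ := norm_sum_le _ _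
    _ ≤ ∑ j ∈ range (n + 1), (j : ℝ) ^ 2 * ‖w‖ ^ j / (Nat.factorial j : ℝ) := by
        refine Finset.sum_le_sum fun j _ => ?_
        rw [norm_mul, Complex.norm_natCast]
        have h1 : ‖tcoef w n j‖ ≤ ‖w‖ ^ j / (Nat.factorial j : ℝ) := tcoef_norm_le w n j
        have h2 : (j : ℝ) ≤ (j : ℝ) ^ 2 := by
          rcases Nat.eq_zero_or_pos j with h0 | h1
          · subst h0; norm_num
          · have : (1 : ℝ) ≤ (j : ℝ) := by exact_mod_cast h1
            nlinarith
        calc (j : ℝ) * ‖tcoef w n j‖ ≤ (j : ℝ) * (‖w‖ ^ j / (Nat.factorial j : ℝ)) :=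
              mul_le_mul_of_nonneg_left h1 (Nat.cast_nonneg j)
          _ ≤ (j : ℝ) ^ 2 * (‖w‖ ^ j / (Nat.factorial j : ℝ)) :=
              mul_le_mul_of_nonneg_right h2 (by positivity)
          _ = (j : ℝ) ^ 2 * ‖w‖ ^ j / (Nat.factorial j : ℝ) := by ring
    _ ≤ Kc w := Summable.sum_le_tsum _ (fun j _ => by positivity)
          (summable_sq_pow_div_factorial (norm_nonneg w))

lemma ratio_eq (n : ℕ) {w : ℂ} (hw : w ≠ 0) (hh : sphHankel n w ≠ 0) :
    zfun n w / sphHankel n w = (Complex.I * w - n) + Vf w n / Tf w n := by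
  have hT : Tf w n ≠ 0 := by
    intro h0
    apply hh
    rw [sphHankel_repr n hw, h0, mul_zero]
  have hE := Ef_ne_zero n hw
  rw [zfun_repr n hw, sphHankel_repr n hw]
  field_simp

lemma eventual_ratio (w : ℂ) (hw : w ≠ 0) (hh : ∀ n : ℕ, 1 ≤ n → sphHankel n w ≠ 0) :
    ∃ n₁ : ℕ, 2 ≤ n₁ ∧ ∀ n, n₁ ≤ n →
      (n : ℝ) / 2 ≤ ‖zfun n w / sphHankel n w‖ ∧ ‖zfun n w / sphHankel n w‖ ≤ 2 * n := by
  set L := Complex.exp (Complex.I⁻¹ * w) with hL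
  have hLpos : 0 < ‖L‖ := norm_pos_iff.2 (Complex.exp_ne_zero _)
  set δ : ℝ := ‖L‖ / 2 with hδ
  have hδpos : 0 < δ := by positivity
  have hTev : ∀ᶠ n in Filter.atTop, δ ≤ ‖Tf w n‖ := by
    have h1 := (tendsto_Tf w).norm
    have h2 : ∀ᶠ n in Filter.atTop, ‖L‖ - δ < ‖Tf w n‖ :=
      h1.eventually (eventually_gt_nhds (by rw [hδ]; linarith))
    filter_upwards [h2] with n hn
    rw [hδ] at hn ⊢
    linarith
  set B : ℝ := ‖w‖ + Kc w / δ with hB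
  have hBpos : 0 ≤ B := add_nonneg (norm_nonneg w) (div_nonneg (Kc_nonneg w) hδpos.le)
  obtain ⟨n₀, hn₀⟩ := Filter.eventually_atTop.1 hTev
  refine ⟨max (max n₀ 2) (⌈2 * B⌉₊ + 2), le_trans (le_max_right n₀ 2) (le_max_left _ _), ?_⟩
  intro n hn
  have hn2 : 2 ≤ n := le_trans (le_trans (le_max_right n₀ 2) (le_max_left _ _)) hn
  have hnn₀ : n₀ ≤ n := le_trans (le_trans (le_max_left n₀ 2) (le_max_left _ _)) hn
  have hnB : 2 * B ≤ (n : ℝ) - 2 := by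
    have h1 : (⌈2 * B⌉₊ + 2 : ℕ) ≤ n := le_trans (le_max_right _ _) hn
    have h2 : 2 * B ≤ (⌈2 * B⌉₊ : ℝ) := Nat.le_ceil _
    have h3 : ((⌈2 * B⌉₊ + 2 : ℕ) : ℝ) ≤ (n : ℝ) := by exact_mod_cast h1
    push_cast at h3
    linarith
  have hT : δ ≤ ‖Tf w n‖ := hn₀ n hnn₀
  have hVT : ‖Vf w n / Tf w n‖ ≤ Kc w / δ := by
    rw [norm_div]
    apply div_le_div₀ (Kc_nonneg w) (Vf_norm_le w n) hδpos hT
  have hrat := ratio_eq n hw (hh n (by omega))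
  have hIwn : ‖Complex.I * w - (n : ℂ)‖ ≤ (n : ℝ) + ‖w‖ := by
    calc ‖Complex.I * w - (n : ℂ)‖ ≤ ‖Complex.I * w‖ + ‖(n : ℂ)‖ := norm_sub_le _ _
      _ = ‖w‖ + n := by rw [norm_mul, Complex.norm_I, one_mul, Complex.norm_natCast]
      _ = (n : ℝ) + ‖w‖ := by ring
  have hIwn' : (n : ℝ) - ‖w‖ ≤ ‖Complex.I * w - (n : ℂ)‖ := by
    calc (n : ℝ) - ‖w‖ = ‖(n : ℂ)‖ - ‖Complex.I * w‖ := by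
          rw [norm_mul, Complex.norm_I, one_mul, Complex.norm_natCast]
      _ ≤ ‖(n : ℂ) - Complex.I * w‖ := norm_sub_norm_le _ _
      _ = ‖Complex.I * w - (n : ℂ)‖ := by rw [norm_sub_rev]
  constructor
  · calc (n : ℝ) / 2 ≤ (n : ℝ) - ‖w‖ - Kc w / δ := by
          rw [hB] at hnB
          linarith
      _ ≤ ‖Complex.I * w - (n : ℂ)‖ - ‖Vf w n / Tf w n‖ := by linarith
      _ ≤ ‖(Complex.I * w - (n : ℂ)) + Vf w n / Tf w n‖ := by
          have h := norm_le_add_norm_add (Complex.I * w - (n : ℂ)) (Vf w n / Tf w n)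
          linarith
      _ = ‖zfun n w / sphHankel n w‖ := by rw [hrat]
  · calc ‖zfun n w / sphHankel n w‖ = ‖(Complex.I * w - (n : ℂ)) + Vf w n / Tf w n‖ := by rw [hrat]
      _ ≤ ‖Complex.I * w - (n : ℂ)‖ + ‖Vf w n / Tf w n‖ := norm_add_le _ _
      _ ≤ ((n : ℝ) + ‖w‖) + Kc w / δ := by linarith
      _ ≤ 2 * n := by
          rw [hB] at hnB
          linarith

lemma q_real_bounds (w : ℂ) (hw : w ≠ 0) (hh : ∀ n : ℕ, 1 ≤ n → sphHankel n w ≠ 0)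
    (hz : ∀ n : ℕ, 1 ≤ n → zfun n w ≠ 0) :
    ∃ n₁ : ℕ, 2 ≤ n₁ ∧ ∀ n, n₁ ≤ n →
      ‖w‖ ^ 2 / 4 ≤ ‖w * sphHankel n w / zfun n w‖ ^ 2 * ((n : ℝ) * ((n : ℝ) + 1)) ∧
      ‖w * sphHankel n w / zfun n w‖ ^ 2 * ((n : ℝ) * ((n : ℝ) + 1)) ≤ 8 * ‖w‖ ^ 2 := by
  obtain ⟨n₁, hn₁2, hev⟩ := eventual_ratio w hw hh
  refine ⟨n₁, hn₁2, fun n hn => ?_⟩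
  obtain ⟨hlo, hhi⟩ := hev n hn
  have hn2 : 2 ≤ n := le_trans hn₁2 hn
  have hnR : (2 : ℝ) ≤ (n : ℝ) := by exact_mod_cast hn2
  have hnpos : (0 : ℝ) < n := by linarith
  set R : ℝ := ‖zfun n w / sphHankel n w‖ with hRdef
  have hRpos : 0 < R := by
    have : (0 : ℝ) < (n : ℝ) / 2 := by linarith
    linarith
  have heq : ‖w * sphHankel n w / zfun n w‖ = ‖w‖ / R := by
    rw [hRdef, ← norm_div]
    congr 1
    rw [div_div_eq_mul_div]
  rw [heq]
  have hwpos : 0 < ‖w‖ := norm_pos_iff.2 hw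
  constructor
  · have h1 : ‖w‖ / (2 * n) ≤ ‖w‖ / R := by
      apply div_le_div_of_nonneg_left hwpos.le hRpos hhi
    have h2 : (‖w‖ / (2 * n)) ^ 2 * ((n : ℝ) * ((n : ℝ) + 1)) ≤
        (‖w‖ / R) ^ 2 * ((n : ℝ) * ((n : ℝ) + 1)) := by
      apply mul_le_mul_of_nonneg_right (pow_le_pow_left₀ (by positivity) h1 2) (by positivity)
    refine le_trans ?_ h2
    rw [div_pow, div_mul_eq_mul_div, le_div_iff₀ (by positivity)]
    have key : ((2 : ℝ) * n) ^ 2 ≤ 4 * ((n : ℝ) * ((n : ℝ) + 1)) := by nlinarith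
    nlinarith [mul_le_mul_of_nonneg_left key (sq_nonneg ‖w‖)]
  · have h1 : ‖w‖ / R ≤ ‖w‖ / ((n : ℝ) / 2) := by
      apply div_le_div_of_nonneg_left hwpos.le (by linarith) hlo
    have h2 : (‖w‖ / R) ^ 2 * ((n : ℝ) * ((n : ℝ) + 1)) ≤
        (‖w‖ / ((n : ℝ) / 2)) ^ 2 * ((n : ℝ) * ((n : ℝ) + 1)) := by
      apply mul_le_mul_of_nonneg_right (pow_le_pow_left₀ (by positivity) h1 2) (by positivity)
    refine le_trans h2 ?_
    rw [div_pow, div_mul_eq_mul_div, div_le_iff₀ (by positivity)]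
    have key : (n : ℝ) * ((n : ℝ) + 1) ≤ 8 * ((n : ℝ) / 2) ^ 2 := by nlinarith
    nlinarith [mul_le_mul_of_nonneg_left key (sq_nonneg ‖w‖)]

noncomputable def qfun (w : ℂ) (n : ℕ) : ℝ≥0 :=
  ‖w * sphHankel n w / zfun n w‖₊ ^ 2 * ((n * (n + 1) : ℕ) : ℝ≥0)

lemma qfun_coe (w : ℂ) (n : ℕ) :
    ((qfun w n : ℝ≥0) : ℝ)
      = ‖w * sphHankel n w / zfun n w‖ ^ 2 * ((n : ℝ) * ((n : ℝ) + 1)) := by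
  rw [qfun]
  push_cast
  ring

lemma ratio_ne_zero (w : ℂ) (hw : w ≠ 0) (hh : ∀ n : ℕ, 1 ≤ n → sphHankel n w ≠ 0)
    (hz : ∀ n : ℕ, 1 ≤ n → zfun n w ≠ 0) {n : ℕ} (hn : 1 ≤ n) :
    w * sphHankel n w / zfun n w ≠ 0 :=
  div_ne_zero (mul_ne_zero hw (hh n hn)) (hz n hn)

lemma qfun_pos (w : ℂ) (hw : w ≠ 0) (hh : ∀ n : ℕ, 1 ≤ n → sphHankel n w ≠ 0)
    (hz : ∀ n : ℕ, 1 ≤ n → zfun n w ≠ 0) {n : ℕ} (hn : 1 ≤ n) : 0 < qfun w n := by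
  apply _root_.mul_pos
  · exact pow_pos (nnnorm_pos.2 (ratio_ne_zero w hw hh hz hn)) 2
  · have : 0 < n * (n + 1) := Nat.mul_pos (by omega) (by omega)
    exact_mod_cast this

lemma exists_C (w : ℂ) (hw : w ≠ 0) (hh : ∀ n : ℕ, 1 ≤ n → sphHankel n w ≠ 0)
    (hz : ∀ n : ℕ, 1 ≤ n → zfun n w ≠ 0) :
    ∃ C : ℝ≥0, 0 < C ∧ ∀ n, 2 ≤ n → qfun w n ≤ C ∧ 1 ≤ C * qfun w n := by
  obtain ⟨n₁, hn₁2, hb⟩ := q_real_bounds w hw hh hz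
  have hwnn : ‖w‖₊ ≠ 0 := nnnorm_ne_zero_iff.2 hw
  set Cb : ℝ≥0 := (8 * ‖w‖₊ ^ 2) ⊔ (4 / ‖w‖₊ ^ 2) with hCb
  set C : ℝ≥0 := (((Finset.range (n₁ + 1)).sup fun m => qfun w m ⊔ (qfun w m)⁻¹) ⊔ Cb) ⊔ 1 with hC
  refine ⟨C, lt_of_lt_of_le zero_lt_one (le_sup_right), fun n hn => ?_⟩
  have hn1 : 1 ≤ n := by omega
  rcases le_or_gt n n₁ with hcase | hcase
  · have hmem : n ∈ Finset.range (n₁ + 1) := Finset.mem_range.2 (by omega)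
    have hsup := Finset.le_sup (f := fun m => qfun w m ⊔ (qfun w m)⁻¹) hmem
    have h1 : qfun w n ≤ C := le_trans (le_trans le_sup_left hsup)
      (le_trans le_sup_left le_sup_left)
    have h2 : (qfun w n)⁻¹ ≤ C := le_trans (le_trans le_sup_right hsup)
      (le_trans le_sup_left le_sup_left)
    refine ⟨h1, ?_⟩
    have hpos := qfun_pos w hw hh hz hn1
    calc (1 : ℝ≥0) = (qfun w n)⁻¹ * qfun w n := (inv_mul_cancel₀ hpos.ne').symm
      _ ≤ C * qfun w n := mul_le_mul_left h2 _
  · obtain ⟨hlo, hhi⟩ := hb n (by omega)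
    have hup : qfun w n ≤ 8 * ‖w‖₊ ^ 2 := by
      rw [← NNReal.coe_le_coe, qfun_coe]
      push_cast
      exact hhi
    have hdown : ‖w‖₊ ^ 2 / 4 ≤ qfun w n := by
      rw [← NNReal.coe_le_coe, qfun_coe]
      push_cast
      exact hlo
    constructor
    · exact le_trans hup (le_trans (le_trans le_sup_left le_sup_right) le_sup_left)
    · have hCge : 4 / ‖w‖₊ ^ 2 ≤ C :=
        le_trans (le_trans le_sup_right le_sup_right) le_sup_left
      calc (1 : ℝ≥0) = (4 / ‖w‖₊ ^ 2) * (‖w‖₊ ^ 2 / 4) := by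
            rw [div_mul_div_comm, mul_comm]
            exact (div_self (by positivity)).symm
        _ ≤ C * qfun w n := mul_le_mul' hCge hdown

lemma key_A {C : ℝ≥0} {u M NN : ℝ≥0∞} {s : ℝ} (hs : 0 < s) (hu0 : u ≠ 0) (hut : u ≠ ⊤)
    (hNu : NN ≤ u) (hq : M * u ≤ (C : ℝ≥0∞)) :
    u ^ ((1 : ℝ) / 2) * M ≤ (C : ℝ≥0∞) / NN ^ s * u ^ (s - 1 / 2) := by
  have hNs : NN ^ s ≤ u ^ s := ENNReal.rpow_le_rpow hNu hs.le
  have h1 : (C : ℝ≥0∞) / u ^ s * u ^ (s - 1 / 2) ≤ (C : ℝ≥0∞) / NN ^ s * u ^ (s - 1 / 2) :=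
    mul_le_mul_left (ENNReal.div_le_div le_rfl hNs) _
  refine le_trans ?_ h1
  have h2 : M * u / u ^ s * u ^ (s - 1 / 2) ≤ (C : ℝ≥0∞) / u ^ s * u ^ (s - 1 / 2) :=
    mul_le_mul_left (ENNReal.div_le_div hq le_rfl) _
  refine le_trans (le_of_eq ?_) h2
  have hpow : u ^ (1 : ℝ) * u ^ (-s) * u ^ (s - 1 / 2) = u ^ ((1 : ℝ) / 2) := by
    rw [← ENNReal.rpow_add _ _ hu0 hut, ← ENNReal.rpow_add _ _ hu0 hut]
    congr 1
    ring
  calc u ^ ((1 : ℝ) / 2) * M = M * (u ^ (1 : ℝ) * u ^ (-s) * u ^ (s - 1 / 2)) := by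
        rw [hpow]; ring
    _ = M * u / u ^ s * u ^ (s - 1 / 2) := by
        rw [ENNReal.rpow_one, ENNReal.rpow_neg]
        simp only [div_eq_mul_inv]
        ring

lemma key_B {C : ℝ≥0} {u M NN : ℝ≥0∞} {s : ℝ} (hs : 0 < s) (hu0 : u ≠ 0) (hut : u ≠ ⊤)
    (hNu : NN ≤ u) (hq : M ≤ (C : ℝ≥0∞) * u) :
    u ^ (-(1 : ℝ) / 2) * M ≤ (C : ℝ≥0∞) / NN ^ s * u ^ (s + 1 / 2) := by
  have hNs : NN ^ s ≤ u ^ s := ENNReal.rpow_le_rpow hNu hs.le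
  calc u ^ (-(1 : ℝ) / 2) * M ≤ u ^ (-(1 : ℝ) / 2) * ((C : ℝ≥0∞) * u) := mul_le_mul_right hq _
    _ = (C : ℝ≥0∞) * (u ^ (-(1 : ℝ) / 2) * u ^ (1 : ℝ)) := by rw [ENNReal.rpow_one]; ring
    _ = (C : ℝ≥0∞) * u ^ ((1 : ℝ) / 2) := by
        rw [← ENNReal.rpow_add _ _ hu0 hut]
        congr 1
        ring
    _ = (C : ℝ≥0∞) / u ^ s * u ^ (s + 1 / 2) := by
        have h3 : (C : ℝ≥0∞) / u ^ s * u ^ (s + 1 / 2)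
            = (C : ℝ≥0∞) * (u ^ (-s) * u ^ (s + 1 / 2)) := by
          rw [ENNReal.rpow_neg, div_eq_mul_inv, mul_assoc]
        rw [h3, ← ENNReal.rpow_add _ _ hu0 hut]
        congr 1
        ring
    _ ≤ (C : ℝ≥0∞) / NN ^ s * u ^ (s + 1 / 2) :=
        mul_le_mul_left (ENNReal.div_le_div le_rfl hNs) _

end DtnAux

theorem dtn_truncation_error_coeff (w : ℂ) (hw : w ≠ 0)
    (hh : ∀ n : ℕ, 1 ≤ n → sphHankel n w ≠ 0)
    (hz : ∀ n : ℕ, 1 ≤ n → zfun n w ≠ 0)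
    (s : ℝ) (hs : 0 < s) :
    ∃ C : ℝ≥0, 0 < C ∧ ∀ N : ℕ, 1 ≤ N → ∀ a b : ℕ → ℤ → ℂ,
      (∑' k : ℕ, ∑ m ∈ Finset.Icc (-((k + N + 1 : ℕ) : ℤ)) ((k + N + 1 : ℕ) : ℤ),
        (lam (k + N + 1) ^ ((1 : ℝ) / 2) *
            (‖w * sphHankel (k + N + 1) w / zfun (k + N + 1) w‖₊ : ℝ≥0∞) ^ 2 *
            (‖a (k + N + 1) m‖₊ : ℝ≥0∞) ^ 2
          + lam (k + N + 1) ^ (-(1 : ℝ) / 2) *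
            (‖zfun (k + N + 1) w / (w * sphHankel (k + N + 1) w)‖₊ : ℝ≥0∞) ^ 2 *
            (‖b (k + N + 1) m‖₊ : ℝ≥0∞) ^ 2))
      ≤ (C : ℝ≥0∞) / (N : ℝ≥0∞) ^ s *
        ∑' k : ℕ, ∑ m ∈ Finset.Icc (-((k + N + 1 : ℕ) : ℤ)) ((k + N + 1 : ℕ) : ℤ),
          (lam (k + N + 1) ^ (s - 1 / 2) * (‖a (k + N + 1) m‖₊ : ℝ≥0∞) ^ 2
            + lam (k + N + 1) ^ (s + 1 / 2) * (‖b (k + N + 1) m‖₊ : ℝ≥0∞) ^ 2) := by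
  obtain ⟨C, hC0, hCb⟩ := DtnAux.exists_C w hw hh hz
  refine ⟨C, hC0, ?_⟩
  intro N hN a b
  rw [← ENNReal.tsum_mul_left]
  refine ENNReal.tsum_le_tsum fun k => ?_
  rw [Finset.mul_sum]
  refine Finset.sum_le_sum fun m _ => ?_
  set n := k + N + 1 with hn
  have hn1 : 1 ≤ n := by omega
  have hn2 : 2 ≤ n := by omega
  obtain ⟨hq1, hq2⟩ := hCb n hn2
  have hu0 : lam n ≠ 0 := by
    rw [lam]
    simp only [ne_eq, Nat.cast_eq_zero]
    have : 0 < n * (n + 1) := Nat.mul_pos (by omega) (by omega)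
    omega
  have hut : lam n ≠ ⊤ := by
    rw [lam]
    exact ENNReal.natCast_ne_top _
  have hNu : (N : ℝ≥0∞) ≤ lam n := by
    rw [lam]
    have h1 : N ≤ n * (n + 1) :=
      le_trans (by omega : N ≤ n) (Nat.le_mul_of_pos_right n (by omega))
    exact_mod_cast h1
  set r := ‖w * sphHankel n w / zfun n w‖₊ with hr
  have hrne : r ≠ 0 := nnnorm_ne_zero_iff.2 (DtnAux.ratio_ne_zero w hw hh hz hn1)
  have hMa : ((r : ℝ≥0∞)) ^ 2 * lam n ≤ (C : ℝ≥0∞) := by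
    have h := ENNReal.coe_le_coe.2 hq1
    rw [DtnAux.qfun] at h
    rw [lam]
    push_cast at h ⊢
    exact h
  have hMb : ((‖zfun n w / (w * sphHankel n w)‖₊ : ℝ≥0∞)) ^ 2 ≤ (C : ℝ≥0∞) * lam n := by
    have hinv : ‖zfun n w / (w * sphHankel n w)‖₊ = r⁻¹ := by
      rw [hr, ← nnnorm_inv, inv_div]
    have hnn : (r⁻¹) ^ 2 ≤ C * ((n * (n + 1) : ℕ) : ℝ≥0) := by
      have h3 : (r ^ 2)⁻¹ * 1 ≤ (r ^ 2)⁻¹ * (C * DtnAux.qfun w n) := mul_le_mul_right hq2 _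
      rw [mul_one] at h3
      calc (r⁻¹) ^ 2 = (r ^ 2)⁻¹ := by rw [inv_pow]
        _ ≤ (r ^ 2)⁻¹ * (C * DtnAux.qfun w n) := h3
        _ = C * ((n * (n + 1) : ℕ) : ℝ≥0) * ((r ^ 2)⁻¹ * r ^ 2) := by
            rw [DtnAux.qfun, ← hr]; ring
        _ = C * ((n * (n + 1) : ℕ) : ℝ≥0) := by
            rw [inv_mul_cancel₀ (pow_ne_zero 2 hrne), mul_one]
    have h := ENNReal.coe_le_coe.2 hnn
    rw [hinv, lam]
    push_cast at h ⊢
    exact h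
  rw [mul_add]
  apply add_le_add
  · rw [← mul_assoc ((C : ℝ≥0∞) / (N : ℝ≥0∞) ^ s)]
    exact mul_le_mul_left (DtnAux.key_A hs hu0 hut hNu hMa) _
  · rw [← mul_assoc ((C : ℝ≥0∞) / (N : ℝ≥0∞) ^ s)]
    exact mul_le_mul_left (DtnAux.key_B hs hu0 hut hNu hMb) _
end
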